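/- Let G ∈ S^n_+ ∩ S^n_C be a centered (Ge = 0) Gram matrix of rank d with EDM D = K(G), so D has embedding dimension d. Let Z be a maximum rank centered exposing vector: Z ⪰ 0, GZ = 0, Ze = 0, and G + Z + eeᵀ ≻ 0. Then for any full rank factorization Z = NNᵀ, the columns of N form a basis of the Gale space gal(D) = Null([Gᵀ, e]ᵀ) (the null space of the (n+1)×n matrix obtained by stacking G on eᵀ). Conversely, if N is a Gale matrix of D (its columns form a basis of gal(D)), then Z = NNᵀ is a maximum rank centered exposing vector of G. -/

import Mathlib

open Matrix BigOperators

noncomputable section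

/-- Gale space membership: `x ∈ Null([G; eᵀ])`. -/
def inGaleSpace {n : ℕ} (G : Matrix (Fin n) (Fin n) ℝ) (x : Fin n → ℝ) : Prop :=
  G *ᵥ x = 0 ∧ ∑ i, x i = 0

/-- Equivalence between maximum-rank centered exposing vectors of a centered
Gram matrix `G` and Gale matrices of the corresponding EDM: any full rank
factorization `Z = NNᵀ` of such an exposing vector yields a Gale matrix, and
conversely `Z = NNᵀ` built from a Gale matrix is a maximum-rank centered
exposing vector. -/
theorem exposing_vector_iff_gale (n d : ℕ) (hdn : d + 1 ≤ n)
    (G : Matrix (Fin n) (Fin n) ℝ) (hG : G.PosSemidef)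
    (hGe : G *ᵥ (fun _ => (1 : ℝ)) = 0) (hrank : G.rank = d)
    (Z : Matrix (Fin n) (Fin n) ℝ)
    (hZ : Z.PosSemidef) (hGZ : G * Z = 0) (hZe : Z *ᵥ (fun _ => (1 : ℝ)) = 0)
    (hmax : (G + Z + Matrix.of (fun _ _ => (1 : ℝ))).PosDef) :
    -- full rank factorizations of Z are Gale matrices
    (∀ N : Matrix (Fin n) (Fin (n - d - 1)) ℝ, N.rank = n - d - 1 → Z = N * Nᵀ →
      ∀ x : Fin n → ℝ, inGaleSpace G x ↔ ∃ c : Fin (n - d - 1) → ℝ, x = N *ᵥ c) ∧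
    -- conversely, a Gale matrix yields a maximum-rank centered exposing vector
    (∀ N : Matrix (Fin n) (Fin (n - d - 1)) ℝ, N.rank = n - d - 1 →
      (∀ x : Fin n → ℝ, inGaleSpace G x ↔ ∃ c : Fin (n - d - 1) → ℝ, x = N *ᵥ c) →
      ((N * Nᵀ).PosSemidef ∧ G * (N * Nᵀ) = 0 ∧
        (N * Nᵀ) *ᵥ (fun _ => (1 : ℝ)) = 0 ∧
        (G + N * Nᵀ + Matrix.of (fun _ _ => (1 : ℝ))).PosDef)) := by
  set e : Fin n → ℝ := fun _ => (1 : ℝ) with he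
  set J : Matrix (Fin n) (Fin n) ℝ := Matrix.of (fun _ _ => (1 : ℝ)) with hJ
  have hGsymm : Gᵀ = G := by
    rw [← conjTranspose_eq_transpose_of_trivial]; exact hG.1
  have hZsymm : Zᵀ = Z := by
    rw [← conjTranspose_eq_transpose_of_trivial]; exact hZ.1
  have hZG : Z * G = 0 := by
    rw [← hGsymm, ← hZsymm, ← transpose_mul, hGZ, transpose_zero]
  have hGJ : G * J = 0 := by
    ext i j
    have := congrFun hGe i
    simpa [mul_apply, mulVec, dotProduct, he, hJ] using this
  have hJG : J * G = 0 := by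
    ext i j
    have := congrFun hGe j
    simp only [mulVec, dotProduct, he, mul_one] at this
    simp only [mul_apply, hJ, of_apply, one_mul, Matrix.zero_apply]
    calc ∑ k, G k j = ∑ k, G j k := by
          refine Finset.sum_congr rfl fun k _ => ?_
          conv_lhs => rw [← hGsymm]
          rfl
      _ = 0 := this
  have hZJ : Z * J = 0 := by
    ext i j
    have := congrFun hZe i
    simpa [mul_apply, mulVec, dotProduct, he, hJ] using this
  have hJZ : J * Z = 0 := by
    ext i j
    have := congrFun hZe j
    simp only [mulVec, dotProduct, he, mul_one] at this
    simp only [mul_apply, hJ, of_apply, one_mul, Matrix.zero_apply]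
    calc ∑ k, Z k j = ∑ k, Z j k := by
          refine Finset.sum_congr rfl fun k _ => ?_
          conv_lhs => rw [← hZsymm]
          rfl
      _ = 0 := this
  set M : Matrix (Fin n) (Fin n) ℝ := G + Z + J with hM
  have hMunit : IsUnit M.det := hmax.det_pos.ne'.isUnit
  have hMZ : M * Z = Z * Z := by
    rw [hM, add_mul, add_mul, hGZ, hJZ, zero_add, add_zero]
  have hZM : Z * M = Z * Z := by
    rw [hM, mul_add, mul_add, hZG, hZJ, zero_add, add_zero]
  have hcomm : M⁻¹ * Z = Z * M⁻¹ := by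
    have l : M⁻¹ * (M * Z) * M⁻¹ = Z * M⁻¹ := by
      rw [← mul_assoc, Matrix.nonsing_inv_mul _ hMunit, one_mul]
    have r : M⁻¹ * (Z * M) * M⁻¹ = M⁻¹ * Z := by
      rw [← mul_assoc, mul_assoc, Matrix.mul_nonsing_inv _ hMunit, mul_one]
    calc M⁻¹ * Z = M⁻¹ * (Z * M) * M⁻¹ := r.symm
      _ = M⁻¹ * (M * Z) * M⁻¹ := by rw [hZM, hMZ]
      _ = Z * M⁻¹ := l
  constructor
  · rintro N - hZN x
    have hGN : G * N = 0 := by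
      have key : (G * N) * (G * N)ᴴ = 0 := by
        rw [conjTranspose_eq_transpose_of_trivial, transpose_mul, ← Matrix.mul_assoc,
          Matrix.mul_assoc G N Nᵀ, ← hZN, hGZ, Matrix.zero_mul]
      exact self_mul_conjTranspose_eq_zero.mp key
    have hNe : Nᵀ *ᵥ e = 0 := by
      have key : (Nᵀ *ᵥ e) ⬝ᵥ (Nᵀ *ᵥ e) = 0 := by
        rw [dotProduct_mulVec, vecMul_transpose, mulVec_mulVec, ← hZN, hZe,
          zero_dotProduct]
      exact dotProduct_self_eq_zero.mp key
    constructor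
    · rintro ⟨hx1, hx2⟩
      have hJx : J *ᵥ x = 0 := by
        ext i
        simpa [mulVec, dotProduct, hJ] using hx2
      have hMx : M *ᵥ x = Z *ᵥ x := by
        rw [hM, add_mulVec, add_mulVec, hx1, hJx, zero_add, add_zero]
      have hx : x = (Z * M⁻¹) *ᵥ x := by
        calc x = (M⁻¹ * M) *ᵥ x := by rw [Matrix.nonsing_inv_mul _ hMunit, one_mulVec]
          _ = M⁻¹ *ᵥ (M *ᵥ x) := by rw [mulVec_mulVec]
          _ = M⁻¹ *ᵥ (Z *ᵥ x) := by rw [hMx]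
          _ = (M⁻¹ * Z) *ᵥ x := by rw [mulVec_mulVec]
          _ = (Z * M⁻¹) *ᵥ x := by rw [hcomm]
      refine ⟨Nᵀ *ᵥ (M⁻¹ *ᵥ x), ?_⟩
      calc x = (Z * M⁻¹) *ᵥ x := hx
        _ = Z *ᵥ (M⁻¹ *ᵥ x) := by rw [← mulVec_mulVec]
        _ = (N * Nᵀ) *ᵥ (M⁻¹ *ᵥ x) := by rw [← hZN]
        _ = N *ᵥ (Nᵀ *ᵥ (M⁻¹ *ᵥ x)) := by rw [← mulVec_mulVec]
    · rintro ⟨c, rfl⟩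
      constructor
      · rw [mulVec_mulVec, hGN, zero_mulVec]
      · have : e ⬝ᵥ (N *ᵥ c) = 0 := by
          rw [dotProduct_mulVec, ← mulVec_transpose, hNe, zero_dotProduct]
        simpa [dotProduct, he] using this
  · rintro N - hgale
    have hGN : G * N = 0 := by
      ext i j
      have h1 := (hgale (N *ᵥ Pi.single j 1)).mpr ⟨Pi.single j 1, rfl⟩
      have := congrFun ((h1).1) i
      simp only [mulVec_single, mul_one] at this
      simpa [mul_apply, mulVec, dotProduct] using this
    have hNe : Nᵀ *ᵥ e = 0 := by
      ext j
      have h1 := (hgale (N *ᵥ Pi.single j 1)).mpr ⟨Pi.single j 1, rfl⟩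
      have := h1.2
      simp only [mulVec_single, mul_one] at this
      simpa [mulVec, dotProduct, he, transpose_apply] using this
    have hPSD : (N * Nᵀ).PosSemidef := by
      have := posSemidef_self_mul_conjTranspose N
      rwa [conjTranspose_eq_transpose_of_trivial] at this
    refine ⟨hPSD, ?_, ?_, ?_⟩
    · rw [← Matrix.mul_assoc, hGN, Matrix.zero_mul]
    · rw [← mulVec_mulVec, hNe, mulVec_zero]
    · rw [posDef_iff_dotProduct_mulVec]; constructor
      · exact (hG.1.add hPSD.1).add (by
          rw [IsHermitian, conjTranspose_eq_transpose_of_trivial]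
          ext i j
          rfl)
      · intro x hx
        have hsplit : star x ⬝ᵥ (G + N * Nᵀ + J) *ᵥ x
            = x ⬝ᵥ (G *ᵥ x) + (Nᵀ *ᵥ x) ⬝ᵥ (Nᵀ *ᵥ x) + (∑ i, x i) * (∑ i, x i) := by
          rw [star_trivial, add_mulVec, add_mulVec, dotProduct_add, dotProduct_add]
          congr 1
          · congr 1
            rw [← mulVec_mulVec, dotProduct_mulVec, ← mulVec_transpose]
          · simp [mulVec, dotProduct, hJ, Finset.mul_sum, Finset.sum_mul, mul_comm]
        have h1 : 0 ≤ x ⬝ᵥ (G *ᵥ x) := by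
          have := hG.dotProduct_mulVec_nonneg x
          rwa [star_trivial] at this
        have h2 : 0 ≤ (Nᵀ *ᵥ x) ⬝ᵥ (Nᵀ *ᵥ x) := Finset.sum_nonneg fun i _ => mul_self_nonneg _
        have h3 : 0 ≤ (∑ i, x i) * (∑ i, x i) := mul_self_nonneg _
        rw [hsplit]
        rcases lt_or_eq_of_le (by positivity : (0:ℝ) ≤ x ⬝ᵥ (G *ᵥ x) + (Nᵀ *ᵥ x) ⬝ᵥ (Nᵀ *ᵥ x) + (∑ i, x i) * (∑ i, x i)) with h | h
        · exact h
        exfalso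
        have e1 : x ⬝ᵥ (G *ᵥ x) = 0 := by linarith
        have e2 : (Nᵀ *ᵥ x) ⬝ᵥ (Nᵀ *ᵥ x) = 0 := by linarith
        have e3 : (∑ i, x i) * (∑ i, x i) = 0 := by linarith
        have hGx : G *ᵥ x = 0 := by
          have := (hG.dotProduct_mulVec_zero_iff x)
          rw [star_trivial] at this
          exact this.mp e1
        have hNx : Nᵀ *ᵥ x = 0 := dotProduct_self_eq_zero.mp e2
        have hsum : ∑ i, x i = 0 := by
          rcases mul_self_eq_zero.mp e3 with h; exact h
        obtain ⟨c, hc⟩ := (hgale x).mp ⟨hGx, hsum⟩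
        apply hx
        have : x ⬝ᵥ x = 0 := by
          nth_rewrite 2 [hc]
          rw [dotProduct_mulVec, ← mulVec_transpose, hNx, zero_dotProduct]
        exact dotProduct_self_eq_zero.mp this
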